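/- Let H be a complex Hilbert space and let T, A, S be bounded operators on H with polar decompositions T = U_T|T|, A = U_A|A|, S = U_S|S|. Set Y = |T|·A·|S*| and W = U_T*U_T U_A U_S U_S*. If Y = W|Y| and the closure of range(W) equals the closure of range(Y), then W is a partial isometry and Y = W|Y| is the polar decomposition of Y (i.e., W*W is the projection onto the closure of range(Y*)). -/

import Mathlib

open ContinuousLinearMap

noncomputable def absOp {H K : Type*} [NormedAddCommGroup H] [InnerProductSpace ℂ H]
    [CompleteSpace H] [NormedAddCommGroup K] [InnerProductSpace ℂ K] [CompleteSpace K]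
    (T : H →L[ℂ] K) : H →L[ℂ] H :=
  CFC.sqrt (ContinuousLinearMap.adjoint T ∘L T)

noncomputable def projCR {H K : Type*} [NormedAddCommGroup H] [InnerProductSpace ℂ H]
    [CompleteSpace H] [NormedAddCommGroup K] [InnerProductSpace ℂ K] [CompleteSpace K]
    (C : K →L[ℂ] H) : H →L[ℂ] H :=
  letI := (LinearMap.range (C : K →ₗ[ℂ] H)).topologicalClosure.isClosed_topologicalClosure.completeSpace_coe
  (LinearMap.range (C : K →ₗ[ℂ] H)).topologicalClosure.subtypeL ∘L
    Submodule.orthogonalProjectionOnto (LinearMap.range (C : K →ₗ[ℂ] H)).topologicalClosure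

/-- `B = U|B|` is the polar decomposition: `U` is a partial isometry (automatic) whose
initial projection `U*U` is the orthogonal projection onto the closure of `range B*`. -/
noncomputable def IsPolarDecomp {H K : Type*} [NormedAddCommGroup H] [InnerProductSpace ℂ H]
    [CompleteSpace H] [NormedAddCommGroup K] [InnerProductSpace ℂ K] [CompleteSpace K]
    (B U : H →L[ℂ] K) : Prop :=
  B = U ∘L absOp B ∧
    ContinuousLinearMap.adjoint U ∘L U = projCR (ContinuousLinearMap.adjoint B)

variable {H : Type*} [NormedAddCommGroup H] [InnerProductSpace ℂ H] [CompleteSpace H]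

open scoped InnerProductSpace
set_option synthInstance.maxHeartbeats 1000000
set_option maxHeartbeats 1000000

lemma absOp_nonneg (B : H →L[ℂ] H) : (0 : H →L[ℂ] H) ≤ absOp B := CFC.sqrt_nonneg _

lemma absOp_selfAdjoint (B : H →L[ℂ] H) :
    ContinuousLinearMap.adjoint (absOp B) = absOp B :=
  ContinuousLinearMap.isSelfAdjoint_iff'.mp (absOp_nonneg B).isSelfAdjoint

lemma aTa_nonneg (B : H →L[ℂ] H) : (0 : H →L[ℂ] H) ≤ ContinuousLinearMap.adjoint B ∘L B := by
  simpa [ContinuousLinearMap.star_eq_adjoint, ContinuousLinearMap.mul_def]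
    using star_mul_self_nonneg B

lemma absOp_sq (B : H →L[ℂ] H) :
    absOp B ∘L absOp B = ContinuousLinearMap.adjoint B ∘L B := by
  have := CFC.sq_sqrt (ContinuousLinearMap.adjoint B ∘L B) (aTa_nonneg B)
  simpa [absOp, sq, ContinuousLinearMap.mul_def] using this

lemma norm_of_inner_self_eq {u v : H} (h : ⟪u, u⟫_ℂ = ⟪v, v⟫_ℂ) : ‖u‖ = ‖v‖ := by
  have h1 : (‖u‖ : ℂ) ^ 2 = (‖v‖ : ℂ) ^ 2 := by
    rwa [inner_self_eq_norm_sq_to_K, inner_self_eq_norm_sq_to_K] at h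
  have h2 : ‖u‖ ^ 2 = ‖v‖ ^ 2 := by exact_mod_cast h1
  nlinarith [norm_nonneg u, norm_nonneg v]

lemma norm_absOp_apply (B : H →L[ℂ] H) (x : H) : ‖absOp B x‖ = ‖B x‖ := by
  refine norm_of_inner_self_eq ?_
  have h1 : ⟪absOp B x, absOp B x⟫_ℂ = ⟪x, absOp B (absOp B x)⟫_ℂ := by
    rw [← ContinuousLinearMap.adjoint_inner_right, absOp_selfAdjoint]
  have h2 : absOp B (absOp B x) = ContinuousLinearMap.adjoint B (B x) := by
    have := congrArg (fun f => f x) (absOp_sq B); simpa using this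
  rw [h1, h2, ContinuousLinearMap.adjoint_inner_right]

lemma ker_absOp (B : H →L[ℂ] H) : LinearMap.ker (absOp B : H →ₗ[ℂ] H) = LinearMap.ker (B : H →ₗ[ℂ] H) := by
  ext x
  simp only [LinearMap.mem_ker, ContinuousLinearMap.coe_coe]
  rw [← norm_eq_zero, ← norm_eq_zero (a := B x), norm_absOp_apply]

lemma ortho_range_adjoint (B : H →L[ℂ] H) :
    (LinearMap.range (ContinuousLinearMap.adjoint B : H →ₗ[ℂ] H))ᗮ = LinearMap.ker (B : H →ₗ[ℂ] H) := by
  ext x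
  simp only [Submodule.mem_orthogonal, LinearMap.mem_ker, LinearMap.mem_range,
    forall_exists_index, ContinuousLinearMap.coe_coe]
  constructor
  · intro h
    have := h (ContinuousLinearMap.adjoint B (B x)) (B x) rfl
    rw [ContinuousLinearMap.adjoint_inner_left] at this
    exact inner_self_eq_zero.mp this
  · intro h u y hy
    subst hy
    rw [ContinuousLinearMap.adjoint_inner_left, h, inner_zero_right]

lemma closure_range_adjoint (B : H →L[ℂ] H) :
    (LinearMap.range (ContinuousLinearMap.adjoint B : H →ₗ[ℂ] H)).topologicalClosure
      = (LinearMap.ker (B : H →ₗ[ℂ] H))ᗮ := by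
  rw [← ortho_range_adjoint B, ← Submodule.orthogonal_orthogonal_eq_closure]

lemma closure_range_absOp (B : H →L[ℂ] H) :
    (LinearMap.range (absOp B : H →ₗ[ℂ] H)).topologicalClosure
      = (LinearMap.range (ContinuousLinearMap.adjoint B : H →ₗ[ℂ] H)).topologicalClosure := by
  rw [closure_range_adjoint B, ← absOp_selfAdjoint B, closure_range_adjoint, ker_absOp]

lemma projCR_apply (C : H →L[ℂ] H) (x : H) :
    letI := (LinearMap.range (C : H →ₗ[ℂ] H)).topologicalClosure.isClosed_topologicalClosure.completeSpace_coe
    projCR C x = ↑(Submodule.orthogonalProjectionOnto (LinearMap.range (C : H →ₗ[ℂ] H)).topologicalClosure x) := rfl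

lemma norm_le_of_pi {U C : H →L[ℂ] H}
    (h : ContinuousLinearMap.adjoint U ∘L U = projCR C) (x : H) : ‖U x‖ ≤ ‖x‖ := by
  letI := (LinearMap.range (C : H →ₗ[ℂ] H)).topologicalClosure.isClosed_topologicalClosure.completeSpace_coe
  set K := (LinearMap.range (C : H →ₗ[ℂ] H)).topologicalClosure
  have h1 : ‖U x‖ ^ 2 = RCLike.re (⟪x, ContinuousLinearMap.adjoint U (U x)⟫_ℂ) := by
    rw [ContinuousLinearMap.adjoint_inner_right, inner_self_eq_norm_sq]
  have h2 : ContinuousLinearMap.adjoint U (U x) = ↑(Submodule.orthogonalProjectionOnto K x) := by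
    have := congrArg (fun f => f x) h
    simpa [projCR] using this
  have h3 : ‖(↑(Submodule.orthogonalProjectionOnto K x) : H)‖ ≤ ‖x‖ := by
    have := (Submodule.orthogonalProjectionOnto K).le_opNorm x
    calc ‖(↑(Submodule.orthogonalProjectionOnto K x) : H)‖ = ‖Submodule.orthogonalProjectionOnto K x‖ := rfl
      _ ≤ ‖Submodule.orthogonalProjectionOnto K‖ * ‖x‖ := this
      _ ≤ 1 * ‖x‖ := by
          exact mul_le_mul_of_nonneg_right (Submodule.orthogonalProjectionOnto_norm_le K) (norm_nonneg x)
      _ = ‖x‖ := one_mul _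
  have h4 : ‖U x‖ ^ 2 ≤ ‖x‖ ^ 2 := by
    rw [h1, h2]
    calc RCLike.re (⟪x, (↑(Submodule.orthogonalProjectionOnto K x) : H)⟫_ℂ)
        ≤ ‖x‖ * ‖(↑(Submodule.orthogonalProjectionOnto K x) : H)‖ := re_inner_le_norm _ _
      _ ≤ ‖x‖ * ‖x‖ := mul_le_mul_of_nonneg_left h3 (norm_nonneg x)
      _ = ‖x‖ ^ 2 := (sq ‖x‖).symm
  exact le_of_pow_le_pow_left₀ two_ne_zero (norm_nonneg x) h4

lemma adjoint_comp_self_apply_of_norm_eq {W : H →L[ℂ] H}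
    (hc : ∀ x, ‖W x‖ ≤ ‖x‖) {m : H} (hm : ‖W m‖ = ‖m‖) :
    ContinuousLinearMap.adjoint W (W m) = m := by
  set D : H →L[ℂ] H := 1 - ContinuousLinearMap.adjoint W ∘L W with hD
  have hDapp : ∀ x, D x = x - ContinuousLinearMap.adjoint W (W x) := by intro x; simp [hD]
  have hDsa : IsSelfAdjoint D := by
    rw [ContinuousLinearMap.isSelfAdjoint_iff']
    have h1 : ContinuousLinearMap.adjoint (1 : H →L[ℂ] H) = 1 := by
      rw [← ContinuousLinearMap.star_eq_adjoint, star_one]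
    simp [hD, map_sub, adjoint_comp, adjoint_adjoint, h1]
  have hDre : ∀ x, RCLike.re (⟪D x, x⟫_ℂ) = ‖x‖ ^ 2 - ‖W x‖ ^ 2 := by
    intro x
    rw [hDapp, inner_sub_left, map_sub, inner_self_eq_norm_sq]
    congr 1
    rw [ContinuousLinearMap.adjoint_inner_left, inner_self_eq_norm_sq]
  have hDpos : (0 : H →L[ℂ] H) ≤ D := by
    rw [ContinuousLinearMap.nonneg_iff_isPositive]
    refine ContinuousLinearMap.isPositive_def'.mpr ⟨hDsa, fun x => ?_⟩
    rw [ContinuousLinearMap.reApplyInnerSelf, hDre]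
    have := hc x
    nlinarith [norm_nonneg (W x), norm_nonneg x]
  set E := CFC.sqrt D with hE
  have hEsq : E ∘L E = D := by
    have := CFC.sq_sqrt D hDpos
    simpa [hE, sq, ContinuousLinearMap.mul_def] using this
  have hEsa : ContinuousLinearMap.adjoint E = E :=
    ContinuousLinearMap.isSelfAdjoint_iff'.mp (CFC.sqrt_nonneg (a := D)).isSelfAdjoint
  have hEm : E m = 0 := by
    have h0 : ⟪E m, E m⟫_ℂ = ⟪m, D m⟫_ℂ := by
      rw [← ContinuousLinearMap.adjoint_inner_right E m (E m), hEsa,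
        ← ContinuousLinearMap.comp_apply, hEsq]
    have h1 : ‖E m‖ ^ 2 = RCLike.re (⟪D m, m⟫_ℂ) := by
      rw [← inner_self_eq_norm_sq (𝕜 := ℂ), h0, inner_re_symm]
    have h2 : ‖E m‖ ^ 2 = 0 := by rw [h1, hDre, hm]; ring
    have := pow_eq_zero_iff (n := 2) two_ne_zero |>.mp h2
    exact norm_eq_zero.mp this
  have hDm : D m = 0 := by rw [← hEsq, ContinuousLinearMap.comp_apply, hEm, map_zero]
  have := hDapp m
  rw [hDm] at this
  exact (sub_eq_zero.mp this.symm).symm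

theorem stmt12 (T A S U_T U_A U_S : H →L[ℂ] H)
    (hT : IsPolarDecomp T U_T) (hA : IsPolarDecomp A U_A) (hS : IsPolarDecomp S U_S)
    (W : H →L[ℂ] H)
    (hWdef : W = ContinuousLinearMap.adjoint U_T ∘L U_T ∘L U_A ∘L U_S ∘L
      ContinuousLinearMap.adjoint U_S)
    (hY : absOp T ∘L A ∘L absOp (ContinuousLinearMap.adjoint S) =
      W ∘L absOp (absOp T ∘L A ∘L absOp (ContinuousLinearMap.adjoint S)))
    (hR : (LinearMap.range (W : H →ₗ[ℂ] H)).topologicalClosure =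
      (LinearMap.range (absOp T ∘L A ∘L absOp (ContinuousLinearMap.adjoint S) : H →ₗ[ℂ] H)).topologicalClosure) :
    W ∘L ContinuousLinearMap.adjoint W ∘L W = W ∧
      IsPolarDecomp (absOp T ∘L A ∘L absOp (ContinuousLinearMap.adjoint S)) W := by
  set Y : H →L[ℂ] H := absOp T ∘L A ∘L absOp (ContinuousLinearMap.adjoint S) with hYdef
  -- W is a contraction
  have hnT : ∀ x, ‖U_T x‖ ≤ ‖x‖ := fun x => norm_le_of_pi hT.2 x
  have hnA : ∀ x, ‖U_A x‖ ≤ ‖x‖ := fun x => norm_le_of_pi hA.2 x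
  have hnS : ∀ x, ‖U_S x‖ ≤ ‖x‖ := fun x => norm_le_of_pi hS.2 x
  have hadj : ∀ (U : H →L[ℂ] H), (∀ x, ‖U x‖ ≤ ‖x‖) →
      ∀ x, ‖ContinuousLinearMap.adjoint U x‖ ≤ ‖x‖ := by
    intro U hU x
    have h1 : ‖U‖ ≤ 1 := ContinuousLinearMap.opNorm_le_bound _ zero_le_one
      (fun y => by simpa using hU y)
    have h2 : ‖ContinuousLinearMap.adjoint U‖ = ‖U‖ :=
      LinearIsometryEquiv.norm_map ContinuousLinearMap.adjoint U
    calc ‖ContinuousLinearMap.adjoint U x‖ ≤ ‖ContinuousLinearMap.adjoint U‖ * ‖x‖ :=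
          (ContinuousLinearMap.adjoint U).le_opNorm x
      _ ≤ 1 * ‖x‖ := mul_le_mul_of_nonneg_right (h2 ▸ h1) (norm_nonneg x)
      _ = ‖x‖ := one_mul _
  have hcW : ∀ x, ‖W x‖ ≤ ‖x‖ := by
    intro x
    rw [hWdef]
    simp only [ContinuousLinearMap.comp_apply]
    calc ‖ContinuousLinearMap.adjoint U_T (U_T (U_A (U_S (ContinuousLinearMap.adjoint U_S x))))‖
        ≤ ‖U_T (U_A (U_S (ContinuousLinearMap.adjoint U_S x)))‖ := hadj U_T hnT _
      _ ≤ ‖U_A (U_S (ContinuousLinearMap.adjoint U_S x))‖ := hnT _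
      _ ≤ ‖U_S (ContinuousLinearMap.adjoint U_S x)‖ := hnA _
      _ ≤ ‖ContinuousLinearMap.adjoint U_S x‖ := hnS _
      _ ≤ ‖x‖ := hadj U_S hnS _
  set M : Submodule ℂ H := (LinearMap.range (absOp Y : H →ₗ[ℂ] H)).topologicalClosure with hM
  have hr : ∀ x, W (absOp Y x) = Y x := by
    intro x
    have := congrArg (fun f => f x) hY
    simpa using this.symm
  -- W is isometric on M
  have hisom : ∀ m ∈ M, ‖W m‖ = ‖m‖ := by
    intro m hm
    have hcl : IsClosed {v : H | ‖W v‖ = ‖v‖} :=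
      isClosed_eq (continuous_norm.comp W.continuous) continuous_norm
    have hsub : (LinearMap.range (absOp Y : H →ₗ[ℂ] H) : Set H) ⊆ {v : H | ‖W v‖ = ‖v‖} := by
      rintro _ ⟨x, rfl⟩
      show ‖W (absOp Y x)‖ = ‖absOp Y x‖
      rw [hr, norm_absOp_apply]
    have hm' : m ∈ closure (LinearMap.range (absOp Y : H →ₗ[ℂ] H) : Set H) := by
      rw [← Submodule.topologicalClosure_coe]
      exact hm
    exact closure_minimal hsub hcl hm'
  have hWWm : ∀ m ∈ M, ContinuousLinearMap.adjoint W (W m) = m := fun m hm =>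
    adjoint_comp_self_apply_of_norm_eq hcW (hisom m hm)
  -- the image of M under W is closed and contains the closure of range Y
  letI : CompleteSpace M :=
    (LinearMap.range (absOp Y : H →ₗ[ℂ] H)).isClosed_topologicalClosure.completeSpace_coe
  have himg : closure (LinearMap.range (Y : H →ₗ[ℂ] H) : Set H) ⊆ W '' (M : Set H) := by
    have hiso : Isometry ⇑(W ∘L M.subtypeL) :=
      AddMonoidHomClass.isometry_of_norm (W ∘L M.subtypeL) (fun m => by simpa using hisom m m.2)
    have hcl2 : IsClosed (Set.range ⇑(W ∘L M.subtypeL)) := hiso.isClosedEmbedding.isClosed_range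
    have hreq : (Set.range ⇑(W ∘L M.subtypeL)) = W '' (M : Set H) := by
      ext y
      constructor
      · rintro ⟨m, rfl⟩; exact ⟨↑m, m.2, rfl⟩
      · rintro ⟨v, hv, rfl⟩; exact ⟨⟨v, hv⟩, rfl⟩
    rw [hreq] at hcl2
    refine closure_minimal ?_ hcl2
    rintro _ ⟨x, rfl⟩
    exact ⟨absOp Y x, Submodule.le_topologicalClosure _ (LinearMap.mem_range_self _ x), hr x⟩
  -- W vanishes on the orthogonal complement of M
  have hker : ∀ q ∈ Mᗮ, W q = 0 := by
    intro q hq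
    have h1 : W q ∈ closure (LinearMap.range (W : H →ₗ[ℂ] H) : Set H) :=
      subset_closure (LinearMap.mem_range_self _ q)
    have h2 : W q ∈ closure (LinearMap.range (Y : H →ₗ[ℂ] H) : Set H) := by
      rw [← Submodule.topologicalClosure_coe, ← hR, Submodule.topologicalClosure_coe] at *
      exact h1
    obtain ⟨m, hmM, hme⟩ := himg h2
    have h3 : ⟪W q, W q⟫_ℂ = 0 := by
      nth_rewrite 2 [← hme]
      rw [← ContinuousLinearMap.adjoint_inner_right W q (W m), hWWm m hmM,
        ← inner_conj_symm, (Submodule.mem_orthogonal _ _).mp hq m hmM, map_zero]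
    simpa using inner_self_eq_zero.mp h3
  -- identification of the two closed subspaces
  have hclM : (LinearMap.range (ContinuousLinearMap.adjoint Y : H →ₗ[ℂ] H)).topologicalClosure = M :=
    (closure_range_absOp Y).symm
  letI : CompleteSpace (LinearMap.range (ContinuousLinearMap.adjoint Y : H →ₗ[ℂ] H)).topologicalClosure :=
    (LinearMap.range (ContinuousLinearMap.adjoint Y : H →ₗ[ℂ] H)).isClosed_topologicalClosure.completeSpace_coe
  set K := (LinearMap.range (ContinuousLinearMap.adjoint Y : H →ₗ[ℂ] H)).topologicalClosure with hK
  have key : ∀ x : H, ContinuousLinearMap.adjoint W (W x) =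
      ↑(Submodule.orthogonalProjectionOnto K x) ∧ W x = W ↑(Submodule.orthogonalProjectionOnto K x) := by
    intro x
    set p : H := ↑(Submodule.orthogonalProjectionOnto K x) with hp
    have hpM : p ∈ M := by rw [← hclM]; exact (Submodule.orthogonalProjectionOnto K x).2
    have hqM : x - p ∈ Mᗮ := by
      rw [← hclM]
      exact K.sub_starProjection_mem_orthogonal x
    have hWx : W x = W p := by
      have := hker _ hqM
      rw [map_sub, sub_eq_zero] at this
      exact this
    refine ⟨?_, hWx⟩
    rw [hWx, hWWm p hpM]
  constructor
  · ext x
    simp only [ContinuousLinearMap.comp_apply]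
    rw [(key x).1, ← (key x).2]
  · refine ⟨hY, ?_⟩
    ext x
    simp only [ContinuousLinearMap.comp_apply]
    rw [(key x).1, projCR_apply]
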